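/- In the matrix FSD setup with n = 2 slices M_0, M_1, set κ_1 = ‖I_K − α·M_0ᵀM_0‖₂, κ_2 = ‖I_K − α·M_1ᵀM_1‖₂ and μ = ‖M_0ᵀM_1‖₂ (which equals ‖M_1ᵀM_0‖₂). Then for every integer k ≥ 1, the errors satisfy the two interleaved recursions E(2k) ≤ κ_2·E(2k−1) + α·μ·E(2k−2) and E(2k+1) ≤ κ_1·E(2k) + α·μ·E(2k−1). (Equations (B.7)–(B.8) of the paper, the key recursions in the proof of Theorem 4.3.) -/

import Mathlib

open Matrix Finset Filter

noncomputable def frobNorm {m k : ℕ} (A : Matrix (Fin m) (Fin k) ℝ) : ℝ :=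
  Real.sqrt (∑ i, ∑ j, (A i j) ^ 2)

noncomputable def specNorm {m k : ℕ} (A : Matrix (Fin m) (Fin k) ℝ) : ℝ :=
  ‖LinearMap.toContinuousLinearMap (Matrix.toEuclideanLin A)‖

def idx (n : ℕ) (hn : 0 < n) (a : ℤ) : Fin n :=
  ⟨(a % (n : ℤ)).toNat, by
    have h1 : (0 : ℤ) < (n : ℤ) := by exact_mod_cast hn
    have h2 := Int.emod_nonneg a h1.ne'
    have h3 := Int.emod_lt_of_pos a h1
    omega⟩

noncomputable def frobVec {m k : ℕ} (A : Matrix (Fin m) (Fin k) ℝ) :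
    EuclideanSpace ℝ (Fin m × Fin k) := WithLp.toLp 2 (fun p : Fin m × Fin k => A p.1 p.2)

lemma frobNorm_eq {m k : ℕ} (A : Matrix (Fin m) (Fin k) ℝ) : frobNorm A = ‖frobVec A‖ := by
  rw [EuclideanSpace.norm_eq, frobNorm]
  congr 1
  rw [Fintype.sum_prod_type]
  exact Finset.sum_congr rfl fun i _ => Finset.sum_congr rfl fun j _ => by
    simp [frobVec, Real.norm_eq_abs, sq_abs]

lemma frobNorm_add_le {m k : ℕ} (A B : Matrix (Fin m) (Fin k) ℝ) :
    frobNorm (A + B) ≤ frobNorm A + frobNorm B := by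
  have h : frobVec (A + B) = frobVec A + frobVec B := rfl
  rw [frobNorm_eq, frobNorm_eq, frobNorm_eq, h]
  exact norm_add_le _ _

lemma frobNorm_smul {m k : ℕ} (a : ℝ) (A : Matrix (Fin m) (Fin k) ℝ) :
    frobNorm (a • A) = |a| * frobNorm A := by
  have h : frobVec (a • A) = a • frobVec A := rfl
  rw [frobNorm_eq, frobNorm_eq, h, norm_smul, Real.norm_eq_abs]

lemma specNorm_nonneg {m k : ℕ} (A : Matrix (Fin m) (Fin k) ℝ) : 0 ≤ specNorm A :=
  norm_nonneg _

lemma specNorm_transpose {m k : ℕ} (A : Matrix (Fin m) (Fin k) ℝ) :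
    specNorm Aᵀ = specNorm A := by
  open scoped Matrix.Norms.L2Operator in
  have h1 : specNorm Aᵀ = ‖Aᵀ‖ := rfl
  have h2 : specNorm A = ‖A‖ := rfl
  have h3 : Aᴴ = Aᵀ := by
    ext i j; simp [conjTranspose]
  rw [h1, h2, ← h3, Matrix.l2_opNorm_conjTranspose]

lemma frobNorm_mul_le {m k p : ℕ} (A : Matrix (Fin m) (Fin k) ℝ)
    (B : Matrix (Fin k) (Fin p) ℝ) : frobNorm (A * B) ≤ specNorm A * frobNorm B := by
  have hcol : ∀ j : Fin p,
      ∑ i, ((A * B) i j) ^ 2 ≤ specNorm A ^ 2 * ∑ i, (B i j) ^ 2 := by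
    intro j
    set v : EuclideanSpace ℝ (Fin k) := (WithLp.equiv 2 _).symm (fun i => B i j) with hv
    have hle := (LinearMap.toContinuousLinearMap (Matrix.toEuclideanLin A)).le_opNorm v
    have hAv : (LinearMap.toContinuousLinearMap (Matrix.toEuclideanLin A)) v
        = (WithLp.equiv 2 (Fin m → ℝ)).symm (A *ᵥ fun i => B i j) := by
      simp [hv, Matrix.toEuclideanLin_apply_piLp_toLp]
    have hn1 : ‖(LinearMap.toContinuousLinearMap (Matrix.toEuclideanLin A)) v‖ ^ 2
        = ∑ i, ((A * B) i j) ^ 2 := by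
      rw [hAv, EuclideanSpace.norm_eq, Real.sq_sqrt (by positivity)]
      refine Finset.sum_congr rfl fun i _ => ?_
      simp [Matrix.mulVec, Matrix.mul_apply, dotProduct, sq_abs]
    have hn2 : ‖v‖ ^ 2 = ∑ i, (B i j) ^ 2 := by
      rw [hv, EuclideanSpace.norm_eq, Real.sq_sqrt (by positivity)]
      exact Finset.sum_congr rfl fun i _ => by simp [sq_abs]
    calc ∑ i, ((A * B) i j) ^ 2 = ‖(LinearMap.toContinuousLinearMap (Matrix.toEuclideanLin A)) v‖ ^ 2 := hn1.symm
      _ ≤ (specNorm A * ‖v‖) ^ 2 := pow_le_pow_left₀ (norm_nonneg _) hle 2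
      _ = specNorm A ^ 2 * ∑ i, (B i j) ^ 2 := by rw [mul_pow, hn2]
  have key : ∑ i, ∑ j, ((A * B) i j) ^ 2 ≤ specNorm A ^ 2 * ∑ i, ∑ j, (B i j) ^ 2 := by
    rw [Finset.sum_comm, Finset.sum_comm (s := Finset.univ) (t := Finset.univ) (f := fun i j => (B i j)^2), Finset.mul_sum]
    exact Finset.sum_le_sum fun j _ => hcol j
  rw [frobNorm, frobNorm]
  calc Real.sqrt (∑ i, ∑ j, ((A * B) i j) ^ 2)
      ≤ Real.sqrt (specNorm A ^ 2 * ∑ i, ∑ j, (B i j) ^ 2) := Real.sqrt_le_sqrt key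
    _ = specNorm A * Real.sqrt (∑ i, ∑ j, (B i j) ^ 2) := by
        rw [Real.sqrt_mul (by positivity), Real.sqrt_sq (specNorm_nonneg A)]

lemma frobNorm_neg {m k : ℕ} (A : Matrix (Fin m) (Fin k) ℝ) : frobNorm (-A) = frobNorm A := by
  have h : (-A) = (-1 : ℝ) • A := by ext i j; simp
  rw [h, frobNorm_smul]; norm_num

lemma frobNorm_sub_bound {k p : ℕ} (U V : Matrix (Fin k) (Fin k) ℝ)
    (D D' : Matrix (Fin k) (Fin p) ℝ) (α : ℝ) (hα : 0 ≤ α) :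
    frobNorm (U * D - α • (V * D')) ≤
      specNorm U * frobNorm D + α * (specNorm V * frobNorm D') := by
  calc frobNorm (U * D - α • (V * D'))
      = frobNorm (U * D + -(α • (V * D'))) := by rw [sub_eq_add_neg]
    _ ≤ frobNorm (U * D) + frobNorm (-(α • (V * D'))) := frobNorm_add_le _ _
    _ = frobNorm (U * D) + α * frobNorm (V * D') := by
        rw [frobNorm_neg, frobNorm_smul, abs_of_nonneg hα]
    _ ≤ specNorm U * frobNorm D + α * (specNorm V * frobNorm D') := by
        have h1 := frobNorm_mul_le U D
        have h2 := frobNorm_mul_le V D'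
        nlinarith

lemma idx_two_eq_zero (h : 0 < 2) (a : ℤ) (ha : a % 2 = 0) : idx 2 h a = 0 := by
  apply Fin.ext
  show (a % 2).toNat = 0
  omega

lemma idx_two_eq_one (h : 0 < 2) (a : ℤ) (ha : a % 2 = 1) : idx 2 h a = 1 := by
  apply Fin.ext
  show (a % 2).toNat = 1
  omega

lemma fsd_step {N K P : ℕ}
    (M : Fin 2 → Matrix (Fin N) (Fin K) ℝ)
    (Xstar : Matrix (Fin K) (Fin P) ℝ)
    (B : Matrix (Fin N) (Fin P) ℝ)
    (α : ℝ)
    (X : ℤ → Matrix (Fin K) (Fin P) ℝ) (R : ℤ → Matrix (Fin N) (Fin P) ℝ)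
    (hR : ∀ t : ℤ, 0 ≤ t →
      R (t + 1) = B - ∑ i : Fin 2, M (idx 2 (by omega) (t - ((i : ℕ) : ℤ))) * X (t - ((i : ℕ) : ℤ)))
    (hXstep : ∀ t : ℤ, 0 ≤ t →
      X (t + 1) = X t + α • ((M (idx 2 (by omega) t))ᵀ * R (t + 1)))
    (t : ℤ) (ht : 1 ≤ t) (a b : Fin 2)
    (ha : idx 2 (by omega) t = a) (hb : idx 2 (by omega) (t - 1) = b)
    (hB : B = (M a + M b) * Xstar) :
    X (t + 1) - Xstar = (1 - α • ((M a)ᵀ * M a)) * (X t - Xstar)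
      - α • ((M a)ᵀ * M b * (X (t - 1) - Xstar)) := by
  have h1 := hXstep t (by omega)
  have h2 := hR t (by omega)
  rw [Fin.sum_univ_two] at h2
  simp only [Fin.val_zero, Fin.val_one, Nat.cast_zero, Nat.cast_one, sub_zero] at h2
  rw [ha, hb] at h2
  rw [ha] at h1
  rw [h1, h2, hB]
  simp only [Matrix.mul_sub, Matrix.mul_add, Matrix.add_mul, Matrix.sub_mul, Matrix.one_mul,
    smul_sub, smul_add, smul_mul_assoc, Matrix.smul_mul, Matrix.mul_assoc]
  abel

theorem fsd_two_slice_interleaved_recursions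
    {N K P : ℕ} (hN : 1 ≤ N) (hK : 1 ≤ K) (hP : 1 ≤ P)
    (M : Fin 2 → Matrix (Fin N) (Fin K) ℝ)
    (Xstar : Matrix (Fin K) (Fin P) ℝ)
    (B : Matrix (Fin N) (Fin P) ℝ) (hB : B = (∑ i, M i) * Xstar)
    (α : ℝ) (hα : 0 < α)
    (X : ℤ → Matrix (Fin K) (Fin P) ℝ) (R : ℤ → Matrix (Fin N) (Fin P) ℝ)
    (hX0 : ∀ t : ℤ, t ≤ 0 → X t = 0)
    (hR : ∀ t : ℤ, 0 ≤ t →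
      R (t + 1) = B - ∑ i : Fin 2, M (idx 2 (by omega) (t - ((i : ℕ) : ℤ))) * X (t - ((i : ℕ) : ℤ)))
    (hXstep : ∀ t : ℤ, 0 ≤ t →
      X (t + 1) = X t + α • ((M (idx 2 (by omega) t))ᵀ * R (t + 1))) :
    specNorm ((M 0)ᵀ * M 1) = specNorm ((M 1)ᵀ * M 0) ∧
      ∀ k : ℤ, 1 ≤ k →
        frobNorm (X (2 * k) - Xstar) ≤
            specNorm ((1 : Matrix (Fin K) (Fin K) ℝ) - α • ((M 1)ᵀ * M 1)) *
                frobNorm (X (2 * k - 1) - Xstar) +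
              α * specNorm ((M 0)ᵀ * M 1) * frobNorm (X (2 * k - 2) - Xstar) ∧
          frobNorm (X (2 * k + 1) - Xstar) ≤
            specNorm ((1 : Matrix (Fin K) (Fin K) ℝ) - α • ((M 0)ᵀ * M 0)) *
                frobNorm (X (2 * k) - Xstar) +
              α * specNorm ((M 0)ᵀ * M 1) * frobNorm (X (2 * k - 1) - Xstar) := by
  have hspec : specNorm ((M 0)ᵀ * M 1) = specNorm ((M 1)ᵀ * M 0) := by
    have h := specNorm_transpose ((M 0)ᵀ * M 1)
    rw [Matrix.transpose_mul, Matrix.transpose_transpose] at h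
    exact h.symm
  refine ⟨hspec, fun k hk => ?_⟩
  have hB' : B = (M 0 + M 1) * Xstar := by rw [hB, Fin.sum_univ_two]
  constructor
  · -- t = 2k - 1, a = 1, b = 0
    have ha : idx 2 (by omega) (2 * k - 1) = 1 := idx_two_eq_one _ _ (by omega)
    have hb : idx 2 (by omega) (2 * k - 1 - 1) = 0 := idx_two_eq_zero _ _ (by omega)
    have hstep := fsd_step M Xstar B α X R hR hXstep (2 * k - 1) (by omega) 1 0 ha hb
      (by rw [hB', add_comm (M 0) (M 1)])
    have e1 : 2 * k - 1 + 1 = 2 * k := by ring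
    have e2 : 2 * k - 1 - 1 = 2 * k - 2 := by ring
    rw [e1, e2] at hstep
    rw [hstep]
    have := frobNorm_sub_bound (1 - α • ((M 1)ᵀ * M 1)) ((M 1)ᵀ * M 0)
      (X (2 * k - 1) - Xstar) (X (2 * k - 2) - Xstar) α hα.le
    rw [hspec]
    calc frobNorm _ ≤ _ := this
      _ = _ := by ring
  · -- t = 2k, a = 0, b = 1
    have ha : idx 2 (by omega) (2 * k) = 0 := idx_two_eq_zero _ _ (by omega)
    have hb : idx 2 (by omega) (2 * k - 1) = 1 := idx_two_eq_one _ _ (by omega)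
    have hstep := fsd_step M Xstar B α X R hR hXstep (2 * k) (by omega) 0 1 ha hb
      (by rw [hB'])
    rw [hstep]
    have := frobNorm_sub_bound (1 - α • ((M 0)ᵀ * M 0)) ((M 0)ᵀ * M 1)
      (X (2 * k) - Xstar) (X (2 * k - 1) - Xstar) α hα.le
    calc frobNorm _ ≤ _ := this
      _ = _ := by ring
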